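/- Let λ, μ, λ', μ' be positive real numbers satisfying the two equations (λ+1)/2 + λμ²/(λ+μ)² = (λ'+1)/2 + λ'μ'²/(λ'+μ')² and (μ+1)/2 + λ²μ/(λ+μ)² = (μ'+1)/2 + λ'²μ'/(λ'+μ')². Then λ = λ' and μ = μ'. -/

import Mathlib

/-- Key algebraic lemma in the variables `s = λ+μ`, `d = λ-μ`. -/
lemma aux_sd (s d s' d' : ℝ) (hs : 0 < s) (hs' : 0 < s')
    (hd : d ^ 2 < s ^ 2) (hd' : d' ^ 2 < s' ^ 2)
    (e1 : s' * (3 * s ^ 2 - d ^ 2) = s * (3 * s' ^ 2 - d' ^ 2))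
    (e2 : d * (s ^ 2 + d ^ 2) * s' ^ 2 = d' * (s' ^ 2 + d' ^ 2) * s ^ 2) :
    s = s' ∧ d = d' := by
  -- d and d' have the same sign
  have h3 : d * d' * ((s' ^ 2 + d' ^ 2) * s ^ 2)
      = d ^ 2 * (s ^ 2 + d ^ 2) * s' ^ 2 := by linear_combination -d * e2
  have hP : 0 < (s' ^ 2 + d' ^ 2) * s ^ 2 := by positivity
  have hN : 0 ≤ d ^ 2 * (s ^ 2 + d ^ 2) * s' ^ 2 := by positivity
  have hdd' : 0 ≤ d * d' := by
    by_contra hlt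
    push_neg at hlt
    have := mul_neg_of_neg_of_pos hlt hP
    linarith
  -- the factored key identity
  have hT : (d * s' - d' * s)
      * (3 * s ^ 2 * s' ^ 2 + 3 * d ^ 2 * s' ^ 2 + 4 * d * d' * s * s'
          + 3 * d' ^ 2 * s ^ 2 - d ^ 2 * d' ^ 2) * s' ^ 2 = 0 := by
    linear_combination (s' * (3 * s' ^ 2 - d' ^ 2)) * e2
      - (d' * (s' ^ 2 + d' ^ 2) * s * s') * e1
  have hB : 0 < 3 * s ^ 2 * s' ^ 2 + 3 * d ^ 2 * s' ^ 2 + 4 * d * d' * s * s'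
      + 3 * d' ^ 2 * s ^ 2 - d ^ 2 * d' ^ 2 := by
    nlinarith [mul_le_mul_of_nonneg_left hd.le (sq_nonneg d'),
      mul_lt_mul_of_pos_left hd' (show (0:ℝ) < s ^ 2 by positivity),
      mul_nonneg hdd' (mul_pos hs hs').le, sq_nonneg d, sq_nonneg d']
  have hF : d * s' = d' * s := by
    have h0 : d * s' - d' * s = 0 := by
      rcases mul_eq_zero.1 ((mul_eq_zero.1 hT).resolve_right (pow_ne_zero 2 (ne_of_gt hs'))) with h | h
      · exact h
      · exact absurd h (ne_of_gt hB)
    linarith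
  have hsq : d ^ 2 * s' ^ 2 = d' ^ 2 * s ^ 2 := by
    linear_combination (d * s' + d' * s) * hF
  have hG : (s - s') * (3 * s' ^ 2 - d' ^ 2) * s = 0 := by
    linear_combination s' * e1 + hsq
  have hss' : s = s' := by
    have h0 : s - s' = 0 := by
      rcases mul_eq_zero.1 hG with h | h
      · rcases mul_eq_zero.1 h with h' | h'
        · exact h'
        · nlinarith
      · exact absurd h (ne_of_gt hs)
    linarith
  refine ⟨hss', ?_⟩
  have : d * s' = d' * s' := by rw [hF, hss']
  exact mul_right_cancel₀ (ne_of_gt hs') this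

/-- The curvature coefficients of the determinant bundle at the origin determine the
parameters `(λ, μ)` of the weighted Bergman module on the bidisc. -/
theorem stmt_4 (lam mu lam' mu' : ℝ) (hlam : 0 < lam) (hmu : 0 < mu)
    (hlam' : 0 < lam') (hmu' : 0 < mu')
    (h1 : (lam + 1) / 2 + lam * mu ^ 2 / (lam + mu) ^ 2
        = (lam' + 1) / 2 + lam' * mu' ^ 2 / (lam' + mu') ^ 2)
    (h2 : (mu + 1) / 2 + lam ^ 2 * mu / (lam + mu) ^ 2
        = (mu' + 1) / 2 + lam' ^ 2 * mu' / (lam' + mu') ^ 2) :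
    lam = lam' ∧ mu = mu' := by
  have hs : (0:ℝ) < lam + mu := by linarith
  have hs' : (0:ℝ) < lam' + mu' := by linarith
  have hsne : (lam + mu) ≠ 0 := ne_of_gt hs
  have hs'ne : (lam' + mu') ≠ 0 := ne_of_gt hs'
  -- sum of the two fractions collapses
  have f : lam * mu ^ 2 / (lam + mu) ^ 2 + lam ^ 2 * mu / (lam + mu) ^ 2
      = lam * mu / (lam + mu) := by
    field_simp
    ring
  have f' : lam' * mu' ^ 2 / (lam' + mu') ^ 2 + lam' ^ 2 * mu' / (lam' + mu') ^ 2
      = lam' * mu' / (lam' + mu') := by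
    field_simp
    ring
  have k1 : lam + mu + 2 * (lam * mu) / (lam + mu)
      = lam' + mu' + 2 * (lam' * mu') / (lam' + mu') := by
    have g : 2 * (lam * mu) / (lam + mu) = 2 * (lam * mu / (lam + mu)) := by ring
    have g' : 2 * (lam' * mu') / (lam' + mu') = 2 * (lam' * mu' / (lam' + mu')) := by ring
    rw [g, g', ← f, ← f']
    linarith
  -- difference of the two fractions
  have f2 : lam * mu ^ 2 / (lam + mu) ^ 2 - lam ^ 2 * mu / (lam + mu) ^ 2
      = -(lam * mu * (lam - mu) / (lam + mu) ^ 2) := by ring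
  have f2' : lam' * mu' ^ 2 / (lam' + mu') ^ 2 - lam' ^ 2 * mu' / (lam' + mu') ^ 2
      = -(lam' * mu' * (lam' - mu') / (lam' + mu') ^ 2) := by ring
  have k2 : (lam - mu) / 2 - lam * mu * (lam - mu) / (lam + mu) ^ 2
      = (lam' - mu') / 2 - lam' * mu' * (lam' - mu') / (lam' + mu') ^ 2 := by
    linarith [h1, h2, f2, f2']
  -- polynomialize
  have e1 : (lam' + mu') * (3 * (lam + mu) ^ 2 - (lam - mu) ^ 2)
      = (lam + mu) * (3 * (lam' + mu') ^ 2 - (lam' - mu') ^ 2) := by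
    field_simp at k1
    linear_combination 2 * k1
  have e2 : (lam - mu) * ((lam + mu) ^ 2 + (lam - mu) ^ 2) * (lam' + mu') ^ 2
      = (lam' - mu') * ((lam' + mu') ^ 2 + (lam' - mu') ^ 2) * (lam + mu) ^ 2 := by
    field_simp at k2
    linear_combination 2 * k2
  have hd : (lam - mu) ^ 2 < (lam + mu) ^ 2 := by nlinarith
  have hd' : (lam' - mu') ^ 2 < (lam' + mu') ^ 2 := by nlinarith
  obtain ⟨hS, hD⟩ := aux_sd (lam + mu) (lam - mu) (lam' + mu') (lam' - mu')
    hs hs' hd hd' e1 e2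
  constructor <;> linarith
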